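/- Let T : H → H be nonexpansive with fixed point ξ, D₀ := max{‖x₀ − ξ‖, ‖v − ξ‖}, and x_{k+1} := α_k v + (1 − α_k) T(x_k) with α_k ∈ (0,1). Then for every k ≥ 1, ‖x_{k+1} − T(x_{k+1})‖ ≤ (1 − α_k)‖x_{k+1} − x_k‖ + 2 D₀ α_k. -/

import Mathlib

theorem stmt5 {H : Type*} [NormedAddCommGroup H] [InnerProductSpace ℝ H]
    (T : H → H) (hT : ∀ x y : H, ‖T x - T y‖ ≤ ‖x - y‖)
    (ξ v : H) (hξ : T ξ = ξ)
    (α : ℕ → ℝ) (hα : ∀ k, α k ∈ Set.Ioo (0:ℝ) 1)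
    (x : ℕ → H) (hx : ∀ k, x (k+1) = α k • v + (1 - α k) • T (x k))
    (D₀ : ℝ) (hD₀ : D₀ = max ‖x 0 - ξ‖ ‖v - ξ‖) :
    ∀ k, 1 ≤ k →
      ‖x (k+1) - T (x (k+1))‖ ≤ (1 - α k) * ‖x (k+1) - x k‖ + 2 * D₀ * α k := by
  have hvD : ‖v - ξ‖ ≤ D₀ := hD₀ ▸ le_max_right _ _
  have hbound : ∀ n, ‖x n - ξ‖ ≤ D₀ := by
    intro n
    induction n with
    | zero => exact hD₀ ▸ le_max_left _ _
    | succ n ih =>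
      have h1 : (0:ℝ) < α n := (hα n).1
      have h2 : α n < 1 := (hα n).2
      have hTx : ‖T (x n) - ξ‖ ≤ ‖x n - ξ‖ := by
        have := hT (x n) ξ; rwa [hξ] at this
      have : x (n+1) - ξ = α n • (v - ξ) + (1 - α n) • (T (x n) - ξ) := by
        rw [hx n]; module
      rw [this]
      calc ‖α n • (v - ξ) + (1 - α n) • (T (x n) - ξ)‖
          ≤ ‖α n • (v - ξ)‖ + ‖(1 - α n) • (T (x n) - ξ)‖ := norm_add_le _ _
        _ = α n * ‖v - ξ‖ + (1 - α n) * ‖T (x n) - ξ‖ := by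
            rw [norm_smul, norm_smul, Real.norm_eq_abs, Real.norm_eq_abs,
              abs_of_pos h1, abs_of_pos (by linarith)]
        _ ≤ α n * D₀ + (1 - α n) * D₀ := by
            gcongr
            · linarith
        _ = D₀ := by ring
  intro k _
  have h1 : (0:ℝ) < α k := (hα k).1
  have h2 : α k < 1 := (hα k).2
  have hsplit : x (k+1) - T (x (k+1)) =
      α k • (v - T (x (k+1))) + (1 - α k) • (T (x k) - T (x (k+1))) := by
    rw [hx k]; module
  have hvT : ‖v - T (x (k+1))‖ ≤ 2 * D₀ := by
    calc ‖v - T (x (k+1))‖ ≤ ‖v - ξ‖ + ‖ξ - T (x (k+1))‖ := by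
          have := norm_sub_le_norm_sub_add_norm_sub v ξ (T (x (k+1))); linarith
      _ ≤ D₀ + D₀ := by
          refine add_le_add hvD ?_
          rw [norm_sub_rev]
          have := hT (x (k+1)) ξ; rw [hξ] at this
          exact this.trans (hbound _)
      _ = 2 * D₀ := by ring
  calc ‖x (k+1) - T (x (k+1))‖
      = ‖α k • (v - T (x (k+1))) + (1 - α k) • (T (x k) - T (x (k+1)))‖ := by
        rw [hsplit]
    _ ≤ ‖α k • (v - T (x (k+1)))‖ + ‖(1 - α k) • (T (x k) - T (x (k+1)))‖ :=
        norm_add_le _ _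
    _ = α k * ‖v - T (x (k+1))‖ + (1 - α k) * ‖T (x k) - T (x (k+1))‖ := by
        rw [norm_smul, norm_smul, Real.norm_eq_abs, Real.norm_eq_abs,
          abs_of_pos h1, abs_of_pos (by linarith)]
    _ ≤ α k * (2 * D₀) + (1 - α k) * ‖x k - x (k+1)‖ := by
        gcongr
        · exact hT _ _
    _ = (1 - α k) * ‖x (k+1) - x k‖ + 2 * D₀ * α k := by
        rw [norm_sub_rev]; ring
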